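/- Let μ and ν be probability measures on a measurable space with μ ≪ ν, and let f : [0,∞) → ℝ be a Borel function for which there exist k₁ ∈ ℝ and k₂ ≥ 0 such that f(r) ≤ k₁ + k₂·r·√(log(1+r)) for all r ≥ 0. Then ∫ f(dμ/dν(θ)) ν(dθ) ≤ k₁ + k₂·√(1 + KL(μ‖ν)), where KL(μ‖ν) = ∫ log(dμ/dν) dμ is the Kullback–Leibler divergence. -/

import Mathlib

open MeasureTheory

lemma sqrt_le_one_add (x : ℝ) (hx : 0 ≤ x) : Real.sqrt x ≤ 1 + x := by
  nlinarith [Real.sq_sqrt hx, Real.sqrt_nonneg x, sq_nonneg (Real.sqrt x - 1)]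

lemma sqrt_integral_aux {α : Type*} [MeasurableSpace α] (μ : Measure α)
    [IsProbabilityMeasure μ] {h : α → ℝ} (hh : Integrable h μ)
    (hpos : ∀ a, 0 ≤ h a) :
    ∫ a, Real.sqrt (h a) ∂μ ≤ Real.sqrt (∫ a, h a ∂μ) := by
  set c := ∫ a, h a ∂μ with hc
  have hc0 : 0 ≤ c := integral_nonneg hpos
  rcases eq_or_lt_of_le hc0 with hc0' | hc0'
  · have hzero : h =ᵐ[μ] 0 := (integral_eq_zero_iff_of_nonneg hpos hh).mp hc0'.symm
    have : (fun a => Real.sqrt (h a)) =ᵐ[μ] 0 := by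
      filter_upwards [hzero] with a ha
      simp [ha]
    rw [integral_congr_ae this]
    simp [Real.sqrt_nonneg]
  · have hsc : Real.sqrt c > 0 := Real.sqrt_pos.mpr hc0'
    have key : ∀ a, Real.sqrt (h a) ≤ (h a + c) / (2 * Real.sqrt c) := by
      intro a
      rw [le_div_iff₀ (by positivity)]
      nlinarith [sq_nonneg (Real.sqrt (h a) - Real.sqrt c),
        Real.sq_sqrt (hpos a), Real.sq_sqrt hc0, Real.sqrt_nonneg (h a),
        Real.sqrt_nonneg c]
    calc ∫ a, Real.sqrt (h a) ∂μ ≤ ∫ a, (h a + c) / (2 * Real.sqrt c) ∂μ := by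
          apply integral_mono _ ((hh.add (integrable_const c)).div_const _) key
          have hI : Integrable (fun a => 1 + h a) μ := (integrable_const 1).add hh
          apply hI.mono'
            (Real.continuous_sqrt.comp_aestronglyMeasurable hh.aestronglyMeasurable)
          filter_upwards with a
          rw [Real.norm_eq_abs, abs_of_nonneg (Real.sqrt_nonneg _)]
          exact sqrt_le_one_add _ (hpos a)
      _ = (c + c * 1) / (2 * Real.sqrt c) := by
          rw [integral_div, integral_add hh (integrable_const c), integral_const]
          simp [hc, measure_univ]
      _ = Real.sqrt c := by
          rw [mul_one]
          rw [div_eq_iff (by positivity)]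
          nlinarith [Real.sq_sqrt hc0]

theorem stmt9 {Θ : Type*} [MeasurableSpace Θ] (μ ν : Measure Θ)
    [IsProbabilityMeasure μ] [IsProbabilityMeasure ν] (hac : μ ≪ ν)
    (f : ℝ → ℝ) (hf : Measurable f) (k₁ k₂ : ℝ) (hk₂ : 0 ≤ k₂)
    (hgrowth : ∀ r : ℝ, 0 ≤ r → f r ≤ k₁ + k₂ * r * Real.sqrt (Real.log (1 + r)))
    (hfint : Integrable (fun θ => f (μ.rnDeriv ν θ).toReal) ν)
    (hklint : Integrable (fun θ => Real.log (μ.rnDeriv ν θ).toReal) μ) :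
    ∫ θ, f (μ.rnDeriv ν θ).toReal ∂ν ≤
      k₁ + k₂ * Real.sqrt (1 + ∫ θ, Real.log (μ.rnDeriv ν θ).toReal ∂μ) := by
  set g : Θ → ℝ := fun θ => (μ.rnDeriv ν θ).toReal with hg
  have hgmeas : Measurable g := (Measure.measurable_rnDeriv μ ν).ennreal_toReal
  have hgpos : ∀ θ, 0 ≤ g θ := fun θ => ENNReal.toReal_nonneg
  -- integrability of g⁻¹ w.r.t. μ and its integral bound
  have hprod : ∀ θ, g θ • (g θ)⁻¹ ≤ 1 := by
    intro θ
    rcases eq_or_lt_of_le (hgpos θ) with h | h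
    · simp [← h]
    · simp [smul_eq_mul, mul_inv_cancel₀ (ne_of_gt h)]
  have hprodpos : ∀ θ, (0:ℝ) ≤ g θ • (g θ)⁻¹ := fun θ => by
    simp [smul_eq_mul]; positivity
  have hprodint : Integrable (fun θ => g θ • (g θ)⁻¹) ν := by
    apply (integrable_const (1:ℝ)).mono' (hgmeas.mul hgmeas.inv).aestronglyMeasurable
    filter_upwards with θ
    simp only [smul_eq_mul, Real.norm_eq_abs]
    rw [abs_of_nonneg (show (0:ℝ) ≤ (g * g⁻¹) θ from mul_nonneg (hgpos θ) (inv_nonneg.mpr (hgpos θ)))]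
    simpa [smul_eq_mul] using hprod θ
  have hinv : Integrable (fun θ => (g θ)⁻¹) μ :=
    (integrable_rnDeriv_smul_iff hac).mp hprodint
  have hinvle : ∫ θ, (g θ)⁻¹ ∂μ ≤ 1 := by
    rw [← integral_rnDeriv_smul hac]
    calc ∫ θ, g θ • (g θ)⁻¹ ∂ν ≤ ∫ _θ, (1:ℝ) ∂ν :=
          integral_mono hprodint (integrable_const 1) hprod
      _ = 1 := by simp
  -- log(1+g) bounds
  have hlogb : ∀ θ, Real.log (1 + g θ) ≤ Real.log (g θ) + (g θ)⁻¹ := by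
    intro θ
    rcases eq_or_lt_of_le (hgpos θ) with h | h
    · simp [← h]
    · have h1 : (1 : ℝ) + g θ = g θ * (1 + (g θ)⁻¹) := by
        field_simp; ring
      rw [h1, Real.log_mul (ne_of_gt h) (by positivity),
        add_le_add_iff_left]
      calc Real.log (1 + (g θ)⁻¹) ≤ 1 + (g θ)⁻¹ - 1 :=
            Real.log_le_sub_one_of_pos (by positivity)
        _ = (g θ)⁻¹ := by ring
  have hlogpos : ∀ θ, 0 ≤ Real.log (1 + g θ) := fun θ =>
    Real.log_nonneg (by linarith [hgpos θ])
  have hlogint : Integrable (fun θ => Real.log (1 + g θ)) μ := by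
    apply (hklint.add hinv).mono'
      ((Real.measurable_log.comp (measurable_const.add hgmeas)).aestronglyMeasurable)
    filter_upwards with θ
    simp only [Pi.add_apply, Function.comp_apply]
    rw [Real.norm_eq_abs, abs_of_nonneg (hlogpos θ)]
    exact hlogb θ
  have hIle : ∫ θ, Real.log (1 + g θ) ∂μ ≤ 1 + ∫ θ, Real.log (g θ) ∂μ := by
    calc ∫ θ, Real.log (1 + g θ) ∂μ ≤ ∫ θ, (Real.log (g θ) + (g θ)⁻¹) ∂μ :=
          integral_mono hlogint (hklint.add hinv) hlogb
      _ = (∫ θ, Real.log (g θ) ∂μ) + ∫ θ, (g θ)⁻¹ ∂μ := integral_add hklint hinv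
      _ ≤ 1 + ∫ θ, Real.log (g θ) ∂μ := by linarith
  -- √(log(1+g)) integrable w.r.t. μ
  have hsqint : Integrable (fun θ => Real.sqrt (Real.log (1 + g θ))) μ := by
    apply ((integrable_const (1:ℝ)).add hlogint).mono'
      (Real.continuous_sqrt.comp_aestronglyMeasurable
        (Real.measurable_log.comp (measurable_const.add hgmeas)).aestronglyMeasurable)
    filter_upwards with θ
    simp only [Pi.add_apply, Function.comp_apply]
    rw [Real.norm_eq_abs, abs_of_nonneg (Real.sqrt_nonneg _)]
    exact sqrt_le_one_add _ (hlogpos θ)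
  -- main chain
  have hbint : Integrable (fun θ => k₁ + k₂ * (g θ • Real.sqrt (Real.log (1 + g θ)))) ν := by
    apply Integrable.add (integrable_const k₁)
    exact ((integrable_rnDeriv_smul_iff hac).mpr hsqint).const_mul k₂
  calc ∫ θ, f (g θ) ∂ν
      ≤ ∫ θ, (k₁ + k₂ * (g θ • Real.sqrt (Real.log (1 + g θ)))) ∂ν := by
        apply integral_mono hfint hbint
        intro θ
        simpa [smul_eq_mul, mul_assoc] using hgrowth (g θ) (hgpos θ)
    _ = k₁ + k₂ * ∫ θ, g θ • Real.sqrt (Real.log (1 + g θ)) ∂ν := by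
        rw [integral_add (integrable_const k₁)
          (((integrable_rnDeriv_smul_iff hac).mpr hsqint).const_mul k₂),
          integral_const, integral_const_mul]
        simp
        exact Or.inl rfl
    _ = k₁ + k₂ * ∫ θ, Real.sqrt (Real.log (1 + g θ)) ∂μ := by
        rw [integral_rnDeriv_smul hac]
    _ ≤ k₁ + k₂ * Real.sqrt (∫ θ, Real.log (1 + g θ) ∂μ) :=
        add_le_add_right
          (mul_le_mul_of_nonneg_left (sqrt_integral_aux μ hlogint hlogpos) hk₂) k₁
    _ ≤ k₁ + k₂ * Real.sqrt (1 + ∫ θ, Real.log (g θ) ∂μ) :=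
        add_le_add_right
          (mul_le_mul_of_nonneg_left (Real.sqrt_le_sqrt hIle) hk₂) k₁
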